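/- arXiv:2202.02544 — 3 statements merged into one kernel-verified Lean document; each statement's English description precedes it below -/
import Mathlib

section
/- Let 1 ≤ p < ∞, -1 < β < 0, and α ∈ ℝ. If the power weight x^α belongs to QB_{β,p}, then there exists ε with 0 < ε < p(β+1) such that x^α belongs to QB_{β,p-ε}. -/
open MeasureTheory Set Real Filter
open scoped ENNReal

noncomputable section

/-- `w` satisfies the `QB_{β,p}` inequality on `(0,∞)` with constant `C`. -/
def QBcond (β p C : ℝ) (w : ℝ → ℝ) : Prop :=
  ∀ r : ℝ, 0 < r →
    (∫ x in Ioi r, (r / x) ^ p * w x) ≤ C * ∫ x in Ioc (0:ℝ) r, (x / r) ^ (β * p) * w x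

/-- `w ∈ QB_{β,p}`. -/
def QB (β p : ℝ) (w : ℝ → ℝ) : Prop := ∃ C : ℝ, 0 < C ∧ QBcond β p C w

/-- The `QB_{β,p}` constant `[w]_{QB_{β,p}}`. -/
def QBconst (β p : ℝ) (w : ℝ → ℝ) : ℝ := sInf {D : ℝ | QBcond β p (D - 1) w}

/-- `f ∈ Q_β`: `f ≥ 0` and `x^{-β} f x` is non-increasing on `(0,∞)`. -/
def Qmono (β : ℝ) (f : ℝ → ℝ) : Prop :=
  (∀ x, 0 ≤ f x) ∧ AntitoneOn (fun x => x ^ (-β) * f x) (Ioi (0:ℝ))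

/-- A weight: nonnegative and integrable on `(0,r]` for every `r > 0`. -/
def IsWeight (w : ℝ → ℝ) : Prop :=
  (∀ x, 0 ≤ w x) ∧ ∀ r : ℝ, 0 < r → IntegrableOn w (Ioc 0 r)

/-- `Ψ(x) = ∫_0^x ψ`. -/
def Psi (ψ : ℝ → ℝ) (x : ℝ) : ℝ := ∫ t in Ioc (0:ℝ) x, ψ t

/-- `w` satisfies the `QB_{β,ψ,p}` inequality with constant `C`. -/
def QBpsiCond (β p C : ℝ) (ψ w : ℝ → ℝ) : Prop :=
  ∀ r : ℝ, 0 < r →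
    (∫ x in Ioi r, (Psi ψ r / Psi ψ x) ^ p * w x)
      ≤ C * ∫ x in Ioc (0:ℝ) r, (Psi ψ x / Psi ψ r) ^ (β * p) * w x

/-- `w ∈ QB_{β,ψ,p}`. -/
def QBpsi (β p : ℝ) (ψ w : ℝ → ℝ) : Prop := ∃ C : ℝ, 0 < C ∧ QBpsiCond β p C ψ w

/-- The `QB_{β,ψ,p}` constant. -/
def QBpsiConst (β p : ℝ) (ψ w : ℝ → ℝ) : ℝ := sInf {D : ℝ | QBpsiCond β p (D - 1) ψ w}

/-- `w` satisfies the `QB_{β,p}(I)` inequality on `I = (0,1)` with constant `C`. -/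
def QBIcond (β p C : ℝ) (w : ℝ → ℝ) : Prop :=
  ∀ r : ℝ, 0 < r → r ≤ 1 →
    (∫ x in Ioc r (1:ℝ), (r / x) ^ p * w x) ≤ C * ∫ x in Ioc (0:ℝ) r, (x / r) ^ (β * p) * w x

/-- `w ∈ QB_{β,p}(I)`. -/
def QBI (β p : ℝ) (w : ℝ → ℝ) : Prop := ∃ C : ℝ, 0 < C ∧ QBIcond β p C w

/-- The `QB_{β,p}(I)` constant. -/
def QBIconst (β p : ℝ) (w : ℝ → ℝ) : ℝ := sInf {D : ℝ | QBIcond β p (D - 1) w}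

/-- `f ∈ Q_β(I)`: `f ≥ 0` and `x^{-β} f x` non-increasing on `(0,1)`. -/
def QmonoI (β : ℝ) (f : ℝ → ℝ) : Prop :=
  (∀ x, 0 ≤ f x) ∧ AntitoneOn (fun x => x ^ (-β) * f x) (Ioo (0:ℝ) 1)

/-- The Hardy averaging operator. -/
def Hardy (f : ℝ → ℝ) (x : ℝ) : ℝ := (1 / x) * ∫ t in Ioc (0:ℝ) x, f t

/-- The weighted grand Lebesgue norm `‖f‖_{L_w^{p),θ}(I)}` on `I = (0,1)`. -/
def grandNorm (p θ : ℝ) (w f : ℝ → ℝ) : ℝ≥0∞ :=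
  ⨆ ε ∈ Ioo (0:ℝ) (p - 1),
    (ENNReal.ofReal (ε ^ θ) *
      ∫⁻ x in Ioo (0:ℝ) 1, ENNReal.ofReal (|f x| ^ (p - ε) * w x)) ^ (1 / (p - ε))



lemma lhs_congr (r q α : ℝ) (hr : 0 < r) :
    EqOn (fun x : ℝ => (r / x) ^ q * x ^ α) (fun x : ℝ => r ^ q * x ^ (α - q)) (Ioi r) := by
  intro x hx
  have hx0 : 0 < x := hr.trans hx
  simp only
  rw [Real.div_rpow hr.le hx0.le, Real.rpow_sub hx0]
  ring

lemma lhs_integral (r q α : ℝ) (hr : 0 < r) (h : α < q - 1) :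
    ∫ x in Ioi r, (r / x) ^ q * x ^ α = r ^ (α + 1) / (q - α - 1) := by
  rw [setIntegral_congr_fun measurableSet_Ioi (lhs_congr r q α hr),
    integral_const_mul, integral_Ioi_rpow_of_lt (by linarith) hr]
  rw [← mul_div_assoc, mul_neg, ← Real.rpow_add hr,
    show q + (α - q + 1) = α + 1 by ring, neg_div, ← div_neg,
    show -(α - q + 1) = q - α - 1 by ring]

lemma lhs_pos (r q α : ℝ) (hr : 0 < r) (h : α < q - 1) :
    0 < ∫ x in Ioi r, (r / x) ^ q * x ^ α := by
  rw [lhs_integral r q α hr h]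
  exact div_pos (Real.rpow_pos_of_pos hr _) (by linarith)

lemma lhs_not_integrable (r q α : ℝ) (hr : 0 < r) (h : q - 1 ≤ α) :
    ¬ IntegrableOn (fun x : ℝ => (r / x) ^ q * x ^ α) (Ioi r) := by
  intro H
  have H2 : IntegrableOn (fun x : ℝ => r ^ q * x ^ (α - q)) (Ioi r) :=
    H.congr_fun (lhs_congr r q α hr) measurableSet_Ioi
  have hrq : (r : ℝ) ^ q ≠ 0 := (Real.rpow_pos_of_pos hr q).ne'
  have H3 : IntegrableOn (fun x : ℝ => x ^ (α - q)) (Ioi r) := by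
    have this : IntegrableOn (fun x : ℝ => (r^q)⁻¹ * (r ^ q * x ^ (α - q))) (Ioi r) := H2.const_mul ((r ^ q)⁻¹)
    refine this.congr_fun (fun x _ => ?_) measurableSet_Ioi
    field_simp
  rw [integrableOn_Ioi_rpow_iff hr] at H3
  linarith

lemma rhs_congr (r s α : ℝ) (hr : 0 < r) :
    EqOn (fun x : ℝ => (x / r) ^ s * x ^ α) (fun x : ℝ => (r ^ s)⁻¹ * x ^ (s + α)) (Ioc 0 r) := by
  intro x hx
  simp only
  rw [Real.div_rpow hx.1.le hr.le, Real.rpow_add hx.1]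
  field_simp

lemma rhs_integral (r s α : ℝ) (hr : 0 < r) (h : -1 < s + α) :
    ∫ x in Ioc (0:ℝ) r, (x / r) ^ s * x ^ α = r ^ (α + 1) / (s + α + 1) := by
  rw [setIntegral_congr_fun measurableSet_Ioc (rhs_congr r s α hr), integral_const_mul]
  have : ∫ x in Ioc (0:ℝ) r, x ^ (s + α) = (r ^ (s + α + 1) - 0 ^ (s + α + 1)) / (s + α + 1) := by
    rw [← intervalIntegral.integral_of_le hr.le]
    exact integral_rpow (Or.inl h)
  rw [this, Real.zero_rpow (by linarith), sub_zero, ← Real.rpow_neg hr.le,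
    div_eq_mul_inv _ (s + α + 1), ← mul_assoc, ← Real.rpow_add hr]
  rw [show -s + (s + α + 1) = α + 1 by ring, ← div_eq_mul_inv]

lemma rhs_not_integrable (r s α : ℝ) (hr : 0 < r) (h : s + α ≤ -1) :
    ¬ IntegrableOn (fun x : ℝ => (x / r) ^ s * x ^ α) (Ioc 0 r) := by
  intro H
  have H2 : IntegrableOn (fun x : ℝ => (r ^ s)⁻¹ * x ^ (s + α)) (Ioc 0 r) :=
    H.congr_fun (rhs_congr r s α hr) measurableSet_Ioc
  have hrq : (r : ℝ) ^ s ≠ 0 := (Real.rpow_pos_of_pos hr s).ne'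
  have H3 : IntegrableOn (fun x : ℝ => x ^ (s + α)) (Ioo 0 r) := by
    have h4 : IntegrableOn (fun x : ℝ => r ^ s * ((r ^ s)⁻¹ * x ^ (s + α))) (Ioc 0 r) := H2.const_mul (r ^ s)
    have := h4.mono_set Ioo_subset_Ioc_self
    refine this.congr_fun (fun x _ => ?_) measurableSet_Ioo
    field_simp
  rw [intervalIntegral.integrableOn_Ioo_rpow_iff hr] at H3
  linarith

theorem power_weight_openness (p β α : ℝ) (hp : 1 ≤ p) (hβ1 : -1 < β) (hβ0 : β < 0)
    (hQB : QB β p (fun x => x ^ α)) :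
    ∃ ε : ℝ, 0 < ε ∧ ε < p * (β + 1) ∧ QB β (p - ε) (fun x => x ^ α) := by
  obtain ⟨C, hCpos, hcond⟩ := hQB
  have hp0 : 0 < p := lt_of_lt_of_le one_pos hp
  have hpb : 0 < p * (β + 1) := mul_pos hp0 (by linarith)
  by_cases hα : α < p - 1
  · by_cases hα2 : -1 < β * p + α
    · refine ⟨min (p * (β + 1) / 2) ((p - 1 - α) / 2), lt_min (by linarith) (by linarith),
        lt_of_le_of_lt (min_le_left _ _) (by linarith), ?_⟩
      set ε := min (p * (β + 1) / 2) ((p - 1 - α) / 2) with hεdef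
      have hε0 : 0 < ε := lt_min (by linarith) (by linarith)
      have hε1 : ε ≤ (p - 1 - α) / 2 := min_le_right _ _
      have hαq : α < (p - ε) - 1 := by linarith
      have hbe : β * ε < 0 := mul_neg_of_neg_of_pos hβ0 hε0
      have hβq : -1 < β * (p - ε) + α := by nlinarith
      have hden : 0 < (p - ε) - α - 1 := by linarith
      have hnum : 0 < β * (p - ε) + α + 1 := by linarith
      refine ⟨(β * (p - ε) + α + 1) / ((p - ε) - α - 1), div_pos hnum hden, fun r hr => ?_⟩
      rw [lhs_integral r (p - ε) α hr hαq]
      rw [show (∫ x in Ioc (0:ℝ) r, (x / r) ^ (β * (p - ε)) * x ^ α)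
        = r ^ (α + 1) / (β * (p - ε) + α + 1) from
        rhs_integral r (β * (p - ε)) α hr (by linarith)]
      apply le_of_eq
      have hnum' := hnum.ne'
      rw [div_mul_div_comm, mul_comm (β * (p - ε) + α + 1) (r ^ (α + 1)), mul_div_mul_right _ _ hnum']
    · exfalso
      push_neg at hα2
      have h1 := hcond 1 one_pos
      have hL : 0 < ∫ x in Ioi 1, ((1:ℝ) / x) ^ p * x ^ α := lhs_pos 1 p α one_pos hα
      have hR : (∫ x in Ioc (0:ℝ) 1, (x / 1) ^ (β * p) * x ^ α) = 0 :=
        integral_undef (rhs_not_integrable 1 (β * p) α one_pos (by linarith))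
      rw [hR, mul_zero] at h1
      linarith
  · push_neg at hα
    refine ⟨p * (β + 1) / 2, by linarith, by linarith, 1, one_pos, fun r hr => ?_⟩
    have hL : (∫ x in Ioi r, (r / x) ^ (p - p * (β + 1) / 2) * x ^ α) = 0 :=
      integral_undef (lhs_not_integrable r _ α hr (by linarith))
    rw [hL, one_mul]
    exact setIntegral_nonneg measurableSet_Ioc fun x hx =>
      mul_nonneg (Real.rpow_nonneg (div_nonneg hx.1.le hr.le) _) (Real.rpow_nonneg hx.1.le _)
end
end

section
/- Let I = (0,1), -1 < β ≤ 0, 1 ≤ p < ∞. If x^α ∈ QB_{β,p}(I), then there exists ε with 0 < ε < p(β+1) such that x^α ∈ QB_{β,p-ε}(I). -/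
open MeasureTheory Set Real Filter
open scoped ENNReal

noncomputable section

lemma qbi_int_zero (s r : ℝ) (hs : s ≤ -1) (hr : 0 < r) :
    ∫ x in Ioc (0:ℝ) r, x ^ s = 0 := by
  apply integral_undef
  intro h
  have h2 : IntegrableOn (fun x : ℝ => x ^ s) (Ioo 0 r) :=
    (integrableOn_Ioc_iff_integrableOn_Ioo).mp h
  linarith [(intervalIntegral.integrableOn_Ioo_rpow_iff hr).mp h2]

lemma qbi_int0 (s r : ℝ) (hs : -1 < s) (hr : 0 < r) :
    ∫ x in Ioc (0:ℝ) r, x ^ s = r ^ (s+1) / (s+1) := by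
  rw [← intervalIntegral.integral_of_le hr.le, integral_rpow (Or.inl hs),
    Real.zero_rpow (by linarith), sub_zero]

lemma qbi_int1 (s r : ℝ) (hs : s ≠ -1) (hr : 0 < r) (hr1 : r ≤ 1) :
    ∫ x in Ioc r (1:ℝ), x ^ s = (1 - r ^ (s+1)) / (s+1) := by
  rw [← intervalIntegral.integral_of_le hr1, integral_rpow
    (Or.inr ⟨hs, by rw [Set.uIcc_of_le hr1]; intro h; exact absurd h.1 (by linarith)⟩),
    Real.one_rpow]

lemma qbi_cong1 (q α r : ℝ) (hr : 0 < r) :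
    ∫ x in Ioc r (1:ℝ), (r / x) ^ q * x ^ α = r ^ q * ∫ x in Ioc r (1:ℝ), x ^ (α - q) := by
  rw [← integral_const_mul]
  apply setIntegral_congr_fun measurableSet_Ioc
  intro x hx
  have hx0 : 0 < x := lt_trans hr hx.1
  show (r / x) ^ q * x ^ α = r ^ q * x ^ (α - q)
  rw [Real.div_rpow hr.le hx0.le, Real.rpow_sub hx0]
  field_simp

lemma qbi_cong2 (c α r : ℝ) (hr : 0 < r) :
    ∫ x in Ioc (0:ℝ) r, (x / r) ^ c * x ^ α = r ^ (-c) * ∫ x in Ioc (0:ℝ) r, x ^ (c + α) := by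
  rw [← integral_const_mul]
  apply setIntegral_congr_fun measurableSet_Ioc
  intro x hx
  show (x / r) ^ c * x ^ α = r ^ (-c) * x ^ (c + α)
  rw [Real.div_rpow hx.1.le hr.le, Real.rpow_add hx.1, Real.rpow_neg hr.le]
  ring

lemma qbi_intOn (s r : ℝ) (hr : 0 < r) (hr1 : r ≤ 1) :
    IntegrableOn (fun x : ℝ => x ^ s) (Ioc r 1) := by
  rw [← intervalIntegrable_iff_integrableOn_Ioc_of_le hr1]
  apply intervalIntegral.intervalIntegrable_rpow
  right
  rw [Set.uIcc_of_le hr1]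
  intro h
  exact absurd h.1 (by linarith)

lemma qbi_intOn_inv (r : ℝ) (hr : 0 < r) (hr1 : r ≤ 1) :
    IntegrableOn (fun x : ℝ => x⁻¹) (Ioc r 1) := by
  rw [← intervalIntegrable_iff_integrableOn_Ioc_of_le hr1]
  apply ContinuousOn.intervalIntegrable
  intro x hx
  rw [Set.uIcc_of_le hr1] at hx
  exact (continuousAt_inv₀ (ne_of_gt (lt_of_lt_of_le hr hx.1))).continuousWithinAt

lemma qbi_pos (s r : ℝ) (hr : 0 < r) (hr1 : r < 1) :
    0 < ∫ x in Ioc r 1, x ^ s := by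
  set m : ℝ := min (r ^ s) 1 with hm
  have hm0 : 0 < m := lt_min (Real.rpow_pos_of_pos hr s) one_pos
  have hb : ∀ x ∈ Ioc r (1:ℝ), m ≤ x ^ s := by
    intro x hx
    have hx0 : 0 < x := lt_trans hr hx.1
    rcases le_or_gt 0 s with h | h
    · exact le_trans (min_le_left _ _) (Real.rpow_le_rpow hr.le hx.1.le h)
    · exact le_trans (min_le_right _ _)
        (Real.one_le_rpow_of_pos_of_le_one_of_nonpos hx0 hx.2 h.le)
  have h1 : ∫ x in Ioc r (1:ℝ), m ≤ ∫ x in Ioc r (1:ℝ), x ^ s := by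
    apply setIntegral_mono_on (integrableOn_const (by
      rw [Real.volume_Ioc]; exact ENNReal.ofReal_ne_top))
      (qbi_intOn s r hr hr1.le) measurableSet_Ioc hb
  have h2 : ∫ x in Ioc r (1:ℝ), m = (1 - r) * m := by
    rw [setIntegral_const, Real.volume_real_Ioc_of_le hr1.le]
    simp [smul_eq_mul]
  nlinarith
  
lemma qbi_log_lower (s r : ℝ) (hs : -1 ≤ s) (hr : 0 < r) (hr1 : r ≤ 1) :
    r ^ (s+1) * (-Real.log r) ≤ ∫ x in Ioc r 1, x ^ s := by
  have h0 : (0:ℝ) ∉ Set.uIcc r 1 := by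
    rw [Set.uIcc_of_le hr1]; intro h; exact absurd h.1 (by linarith)
  have hinv : ∫ x in Ioc r (1:ℝ), x⁻¹ = -Real.log r := by
    rw [← intervalIntegral.integral_of_le hr1, integral_inv h0, one_div,
      Real.log_inv]
  have hb : ∀ x ∈ Ioc r (1:ℝ), r ^ (s+1) * x⁻¹ ≤ x ^ s := by
    intro x hx
    have hx0 : 0 < x := lt_of_lt_of_le hr hx.1.le
    have e : x ^ s = x ^ (s+1) * x⁻¹ := by
      rw [show s = (s+1) + (-1) by ring, Real.rpow_add hx0, Real.rpow_neg_one]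
      ring_nf
    rw [e]
    have : r ^ (s+1) ≤ x ^ (s+1) := Real.rpow_le_rpow hr.le hx.1.le (by linarith)
    exact mul_le_mul_of_nonneg_right this (inv_nonneg.mpr hx0.le)
  calc r ^ (s+1) * (-Real.log r) = ∫ x in Ioc r (1:ℝ), r ^ (s+1) * x⁻¹ := by
        rw [integral_const_mul, hinv]
    _ ≤ ∫ x in Ioc r (1:ℝ), x ^ s :=
        setIntegral_mono_on ((qbi_intOn_inv r hr hr1).const_mul _)
          (qbi_intOn s r hr hr1) measurableSet_Ioc hb

lemma qbi_of (β q α : ℝ) (hq : 0 < q) (h1 : -1 < β * q + α) (h2 : α - q < -1) :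
    QBI β q (fun x => x ^ α) := by
  have hD : 0 < β * q + α + 1 := by linarith
  have hD' : 0 < q - α - 1 := by linarith
  refine ⟨(β * q + α + 1) / (q - α - 1), by positivity, ?_⟩
  intro r hr hr1
  rw [qbi_cong1 q α r hr, qbi_cong2 (β * q) α r hr,
    qbi_int0 (β * q + α) r (by linarith) hr,
    qbi_int1 (α - q) r (by intro h; rw [h] at h2; norm_num at h2) hr hr1]
  have e1 : r ^ (-(β * q)) * (r ^ (β * q + α + 1) / (β * q + α + 1)) =
      r ^ (α + 1) / (β * q + α + 1) := by
    rw [← mul_div_assoc, ← Real.rpow_add hr, show -(β * q) + (β * q + α + 1) = α + 1 by ring]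
  have e2 : r ^ q * r ^ (α - q + 1) = r ^ (α + 1) := by
    rw [← Real.rpow_add hr, show q + (α - q + 1) = α + 1 by ring]
  rw [e1, show (β * q + α + 1) / (q - α - 1) * (r ^ (α + 1) / (β * q + α + 1)) =
      r ^ (α + 1) / (q - α - 1) by field_simp]
  have h3 : (1 - r ^ (α - q + 1)) / (α - q + 1) = (r ^ (α - q + 1) - 1) / (q - α - 1) := by
    rw [div_eq_div_iff (by linarith) (by linarith)]; ring
  calc r ^ q * ((1 - r ^ (α - q + 1)) / (α - q + 1))
      = (r ^ q * (r ^ (α - q + 1) - 1)) / (q - α - 1) := by rw [h3, mul_div_assoc]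
    _ ≤ (r ^ q * r ^ (α - q + 1)) / (q - α - 1) := by
        gcongr ?_ / (q - α - 1)
        nlinarith [Real.rpow_pos_of_pos hr q]
    _ = r ^ (α + 1) / (q - α - 1) := by rw [e2]


theorem power_weight_openness_I (p β α : ℝ) (hp : 1 ≤ p) (hβ1 : -1 < β) (hβ0 : β ≤ 0)
    (hQB : QBI β p (fun x => x ^ α)) :
    ∃ ε : ℝ, 0 < ε ∧ ε < p * (β + 1) ∧ QBI β (p - ε) (fun x => x ^ α) := by
  obtain ⟨C, hC, hcond⟩ := hQB
  have hp0 : (0:ℝ) < p := by linarith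
  have hA : -1 < β * p + α := by
    by_contra hA'
    push_neg at hA'
    have h := hcond (1/2) (by norm_num) (by norm_num)
    rw [qbi_cong1 p α (1/2) (by norm_num), qbi_cong2 (β*p) α (1/2) (by norm_num),
      qbi_int_zero (β*p+α) (1/2) hA' (by norm_num)] at h
    have hpos := qbi_pos (α - p) (1/2) (by norm_num) (by norm_num)
    nlinarith [Real.rpow_pos_of_pos (show (0:ℝ) < 1/2 by norm_num) p]
  have hB : α < p - 1 := by
    by_contra hB'
    push_neg at hB'
    have hD : 0 < β*p+α+1 := by linarith
    have key : ∀ r : ℝ, 0 < r → r ≤ 1 → -Real.log r ≤ C / (β*p+α+1) := by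
      intro r hr hr1
      have h := hcond r hr hr1
      rw [qbi_cong1 p α r hr, qbi_cong2 (β*p) α r hr, qbi_int0 (β*p+α) r hA hr] at h
      have hlow := qbi_log_lower (α - p) r (by linarith) hr hr1
      have e1 : r ^ (-(β*p)) * r ^ (β*p+α+1) = r ^ (α+1) := by
        rw [← Real.rpow_add hr, show -(β*p)+(β*p+α+1) = α+1 by ring]
      have e2 : r ^ p * r ^ (α-p+1) = r ^ (α+1) := by
        rw [← Real.rpow_add hr, show p+(α-p+1) = α+1 by ring]
      have hr1p : 0 < r ^ (α+1) := Real.rpow_pos_of_pos hr _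
      have hrp : (0:ℝ) < r ^ p := Real.rpow_pos_of_pos hr _
      have step' : r ^ (α+1) * (-Real.log r) ≤ r ^ (α+1) * (C/(β*p+α+1)) := by
        calc r ^ (α+1) * (-Real.log r) = r ^ p * (r ^ (α-p+1) * (-Real.log r)) := by
              rw [← mul_assoc, e2]
          _ ≤ r ^ p * ∫ x in Ioc r 1, x ^ (α - p) :=
              mul_le_mul_of_nonneg_left hlow hrp.le
          _ ≤ C * (r ^ (-(β*p)) * (r ^ (β*p+α+1)/(β*p+α+1))) := h
          _ = C * (r ^ (α+1) / (β*p+α+1)) := by rw [← mul_div_assoc, e1]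
          _ = r ^ (α+1) * (C/(β*p+α+1)) := by ring
      exact (mul_le_mul_iff_right₀ hr1p).mp step'
    set K := C/(β*p+α+1) with hKdef
    have hK : 0 ≤ K := le_of_lt (div_pos hC hD)
    have h := key (Real.exp (-(K+1))) (Real.exp_pos _)
      (Real.exp_le_one_iff.mpr (by linarith))
    rw [Real.log_exp] at h
    linarith
  have hβ1pos : 0 < p*(β+1) := by nlinarith
  have hPA : 0 < p-1-α := by linarith
  set ε := min (p*(β+1)) (p-1-α) / 2 with hεdef
  have m1 := min_le_left (p*(β+1)) (p-1-α)
  have m2 := min_le_right (p*(β+1)) (p-1-α)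
  have hmin := lt_min hβ1pos hPA
  have hε0 : 0 < ε := by rw [hεdef]; linarith
  have hεlt : ε < p*(β+1) := by rw [hεdef]; linarith
  have hq : 0 < p - ε := by nlinarith
  have h1 : -1 < β*(p-ε)+α := by nlinarith
  have h2 : α - (p-ε) < -1 := by rw [hεdef] at *; linarith
  exact ⟨ε, hε0, hεlt, qbi_of β (p-ε) α hq h1 h2⟩
end
end

section
/- Let -1 < β ≤ 0 and let f : (0,1) → [0,∞) be measurable with x^{-β}f(x) non-increasing. Then the Hardy average Hf(x) = (1/x)∫_0^x f(t) dt also satisfies that x^{-β}Hf(x) is non-increasing on (0,1); i.e., H maps Q_β(I) into Q_β(I). -/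
open MeasureTheory Set Real Filter
open scoped ENNReal

noncomputable section

lemma intOn_comp_mul {f : ℝ → ℝ} (hfi : IntegrableOn f (Ioo 0 1)) {x : ℝ}
    (hx : x ∈ Ioo (0:ℝ) 1) : IntegrableOn (fun s => f (x * s)) (Ioc (0:ℝ) 1) := by
  have h1 : IntegrableOn f (Ioc 0 x) := hfi.mono_set (fun t ht => ⟨ht.1, ht.2.trans_lt hx.2⟩)
  have h2 : IntervalIntegrable f volume 0 x :=
    (intervalIntegrable_iff_integrableOn_Ioc_of_le hx.1.le).2 h1
  have h3 := h2.comp_mul_left (c := x)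
  rw [zero_div, div_self hx.1.ne'] at h3
  exact (intervalIntegrable_iff_integrableOn_Ioc_of_le zero_le_one).1 h3

lemma hardy_eq (f : ℝ → ℝ) {x : ℝ} (hx : 0 < x) :
    Hardy f x = ∫ s in Ioc (0:ℝ) 1, f (x * s) := by
  have h1 : (∫ s in (0:ℝ)..1, f (x * s)) = x⁻¹ • ∫ t in (0:ℝ)..x, f t := by
    simpa using intervalIntegral.integral_comp_mul_left (a := (0:ℝ)) (b := 1) f hx.ne'
  rw [← intervalIntegral.integral_of_le zero_le_one, h1,
    intervalIntegral.integral_of_le hx.le]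
  simp [Hardy, smul_eq_mul, one_div]

lemma rpow_shuffle {f : ℝ → ℝ} {β t s : ℝ} (ht : 0 < t) (hs : 0 < s) :
    t ^ (-β) * f (t * s) = s ^ β * ((t * s) ^ (-β) * f (t * s)) := by
  have h1 : (t * s) ^ (-β) = t ^ (-β) * s ^ (-β) := Real.mul_rpow ht.le hs.le
  have h2 : s ^ β * s ^ (-β) = 1 := by
    rw [← Real.rpow_add hs]; simp
  rw [h1]
  calc t ^ (-β) * f (t * s) = (s ^ β * s ^ (-β)) * (t ^ (-β) * f (t * s)) := by rw [h2]; ring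
    _ = s ^ β * (t ^ (-β) * s ^ (-β) * f (t * s)) := by ring

theorem hardy_preserves_Qbeta (β : ℝ) (hβ1 : -1 < β) (hβ0 : β ≤ 0)
    (f : ℝ → ℝ) (hfm : Measurable f) (hfi : IntegrableOn f (Ioo 0 1))
    (hf : QmonoI β f) :
    AntitoneOn (fun x => x ^ (-β) * Hardy f x) (Ioo (0:ℝ) 1) := by
  intro x hx y hy hxy
  simp only [hardy_eq f hx.1, hardy_eq f hy.1]
  rw [← integral_const_mul, ← integral_const_mul]
  apply MeasureTheory.setIntegral_mono_on
  · exact (intOn_comp_mul hfi hy).const_mul _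
  · exact (intOn_comp_mul hfi hx).const_mul _
  · exact measurableSet_Ioc
  · intro s hs
    have hxs : x * s ∈ Ioo (0:ℝ) 1 :=
      ⟨mul_pos hx.1 hs.1, (mul_le_of_le_one_right hx.1.le hs.2).trans_lt hx.2⟩
    have hys : y * s ∈ Ioo (0:ℝ) 1 :=
      ⟨mul_pos hy.1 hs.1, (mul_le_of_le_one_right hy.1.le hs.2).trans_lt hy.2⟩
    have hle : x * s ≤ y * s := mul_le_mul_of_nonneg_right hxy hs.1.le
    have hg := hf.2 hxs hys hle
    rw [rpow_shuffle hx.1 hs.1, rpow_shuffle hy.1 hs.1]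
    exact mul_le_mul_of_nonneg_left hg (Real.rpow_nonneg hs.1.le β)
end
end
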